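/- Let n ≥ 2 and d > 0. The determinant of the (n+3)×(n+3) matrix M with M₀₀ = 0, M₀ⱼ = Mⱼ₀ = 1 for j ≥ 1, diagonal entries Mⱼⱼ = 0 for j ≥ 1, M₁,ₙ₊₂ = Mₙ₊₂,₁ = t, and all other off-diagonal entries (among rows/columns 1..n+2) equal to d², equals (−1)^{n−1}·d^{2n−2}·t·(n·t − (2n+2)·d²). -/

import Mathlib

/-- Cayley-Menger matrix of n+2 points where all pairwise values are d²
except the value between the first and last point, which is t. -/
noncomputable def M11 (n : ℕ) (d t : ℂ) : Matrix (Fin (n + 3)) (Fin (n + 3)) ℂ :=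
  Matrix.of fun i j =>
    if i = 0 then (if j = 0 then 0 else 1)
    else if j = 0 then 1
    else if i = j then 0
    else if (i = 1 ∧ j = Fin.last (n + 2)) ∨ (i = Fin.last (n + 2) ∧ j = 1) then t
    else d ^ 2

theorem stmt11 (n : ℕ) (hn : 2 ≤ n) (d : ℝ) (hd : 0 < d) (t : ℂ) :
    Matrix.det (M11 n (d : ℂ) t) =
      (-1 : ℂ) ^ (n - 1) * (d : ℂ) ^ (2 * n - 2) * t *
        ((n : ℂ) * t - (2 * (n : ℂ) + 2) * (d : ℂ) ^ 2) := by
  have hd0 : (d : ℂ) ≠ 0 := by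
    exact_mod_cast ne_of_gt (by exact_mod_cast hd : (0:ℝ) < d)
  have hn1 : ((n : ℂ) - 1) ≠ 0 :=
    sub_ne_zero.mpr (by exact_mod_cast (by omega : n ≠ 1))
  -- setup
  have h3n : 3 + n = n + 3 := by omega
  set w : Fin 3 → ℂ := ![1, (d:ℂ)^2, (d:ℂ)^2] with hw
  set A : Matrix (Fin 3) (Fin 3) ℂ := !![0,1,1;1,0,t;1,t,0] with hA
  set C : Matrix (Fin 3) (Fin n) ℂ := Matrix.of (fun a _ => w a) with hC
  set C' : Matrix (Fin n) (Fin 3) ℂ := Matrix.of (fun _ a => w a) with hC'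
  set D : Matrix (Fin n) (Fin n) ℂ :=
    Matrix.of (fun k k' => if k = k' then 0 else (d:ℂ)^2) with hD
  set p2 : Fin (n+3) := ⟨2, by omega⟩ with hp2
  set e : Fin 3 ⊕ Fin n ≃ Fin (n+3) :=
    (finSumFinEquiv.trans (finCongr h3n)).trans (Equiv.swap p2 (Fin.last (n+2))) with he
  have hlastval : (Fin.last (n+2)).val = n + 2 := rfl
  have h0p2 : (0 : Fin (n+3)) ≠ p2 := by simp [hp2, Fin.ext_iff]
  have h0l : (0 : Fin (n+3)) ≠ Fin.last (n+2) := by simp [Fin.ext_iff]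
  have h1p2 : (1 : Fin (n+3)) ≠ p2 := by simp [hp2, Fin.ext_iff]
  have h1l : (1 : Fin (n+3)) ≠ Fin.last (n+2) := by simp [Fin.ext_iff]
  have he0 : e (Sum.inl 0) = (0 : Fin (n+3)) := by
    show Equiv.swap p2 (Fin.last (n+2)) (finCongr h3n (finSumFinEquiv (Sum.inl 0))) = 0
    have h1 : (finCongr h3n (finSumFinEquiv (Sum.inl (0:Fin 3)))) = (0 : Fin (n+3)) := by
      apply Fin.ext; simp
    rw [h1, Equiv.swap_apply_of_ne_of_ne h0p2 h0l]
  have he1 : e (Sum.inl 1) = (1 : Fin (n+3)) := by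
    show Equiv.swap p2 (Fin.last (n+2)) (finCongr h3n (finSumFinEquiv (Sum.inl 1))) = 1
    have h1 : (finCongr h3n (finSumFinEquiv (Sum.inl (1:Fin 3)))) = (1 : Fin (n+3)) := by
      apply Fin.ext; simp
    rw [h1, Equiv.swap_apply_of_ne_of_ne h1p2 h1l]
  have hel : e (Sum.inl 2) = Fin.last (n+2) := by
    show Equiv.swap p2 (Fin.last (n+2)) (finCongr h3n (finSumFinEquiv (Sum.inl 2))) = _
    have h1 : (finCongr h3n (finSumFinEquiv (Sum.inl (2:Fin 3)))) = p2 := by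
      apply Fin.ext; simp [hp2]
    rw [h1, Equiv.swap_apply_left]
  have hne3 : ∀ i : Fin (n+3), i.val ≠ 0 → i.val ≠ 1 → i.val ≠ n+2 →
      (i ≠ 0 ∧ i ≠ 1 ∧ i ≠ Fin.last (n+2)) := by
    intro i a b c
    refine ⟨?_, ?_, ?_⟩ <;> simp only [ne_eq, Fin.ext_iff, Fin.val_zero, Fin.val_one, Fin.val_last] <;> omega
  have her : ∀ k : Fin n, e (Sum.inr k) ≠ 0 ∧ e (Sum.inr k) ≠ 1 ∧
      e (Sum.inr k) ≠ Fin.last (n+2) := by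
    intro k
    have hklt := k.isLt
    have hv : (e (Sum.inr k)).val = 2 ∨
        ((e (Sum.inr k)).val = 3 + k.val ∧ 3 + k.val ≠ n + 2) := by
      have hy : e (Sum.inr k) = Equiv.swap p2 (Fin.last (n+2))
          (finCongr h3n (finSumFinEquiv (Sum.inr k))) := rfl
      set y : Fin (n+3) := finCongr h3n (finSumFinEquiv (Sum.inr k)) with hyd
      have hyval : y.val = 3 + k.val := by simp [hyd]; omega
      rw [hy, Equiv.swap_apply_def]
      split_ifs with h1 h2
      · exact absurd (congrArg Fin.val h1) (by simp [hyval, hp2]; omega)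
      · left; rfl
      · right
        refine ⟨hyval, fun h => h2 ?_⟩
        apply Fin.ext; rw [hyval]; exact h.trans hlastval.symm
    obtain h | ⟨h, h2⟩ := hv
    · exact hne3 _ (by omega) (by omega) (by omega)
    · exact hne3 _ (by omega) (by omega) (by omega)
  have hgen : ∀ i j : Fin (n+3), i ≠ 0 → i ≠ 1 → i ≠ Fin.last (n+2) →
      j ≠ 0 → j ≠ 1 → j ≠ Fin.last (n+2) →
      M11 n (d:ℂ) t i j = if i = j then 0 else (d:ℂ)^2 := by
    intro i j hi0 hi1 hil hj0 hj1 hjl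
    simp only [M11, Matrix.of_apply, if_neg hi0, if_neg hj0]
    by_cases h : i = j
    · simp [h]
    · rw [if_neg h, if_neg (by rintro (⟨h1, _⟩ | ⟨h1, _⟩); exacts [hi1 h1, hil h1]),
        if_neg h]
  have hM : (M11 n (d:ℂ) t).submatrix e e = Matrix.fromBlocks A C C' D := by
    ext i j
    rcases i with a | k <;> rcases j with b | k'
    · fin_cases a <;> fin_cases b <;>
        simp [Matrix.submatrix_apply, he0, he1, hel, M11, hA, h0l, h1l,
          Ne.symm h0l, Ne.symm h1l, hw, Matrix.vecHead, Matrix.vecTail]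
    · obtain ⟨hr0, hr1, hrl⟩ := her k'
      fin_cases a <;>
        simp [Matrix.submatrix_apply, he0, he1, hel, M11, hC, hw, h0l, h1l,
          Ne.symm h0l, Ne.symm h1l, hr0, hr1, hrl, Ne.symm hr0, Ne.symm hr1, Ne.symm hrl]
    · obtain ⟨hr0, hr1, hrl⟩ := her k
      fin_cases b <;>
        simp [Matrix.submatrix_apply, he0, he1, hel, M11, hC', hw, h0l, h1l,
          Ne.symm h0l, Ne.symm h1l, hr0, hr1, hrl, Ne.symm hr0, Ne.symm hr1, Ne.symm hrl]
    · obtain ⟨hi0, hi1, hil⟩ := her k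
      obtain ⟨hj0, hj1, hjl⟩ := her k'
      rw [Matrix.submatrix_apply, hgen _ _ hi0 hi1 hil hj0 hj1 hjl]
      simp [hD, e.injective.eq_iff]
  set E : ℂ := (d:ℂ)^2 * ((n:ℂ)-1) with hE
  have hE0 : E ≠ 0 := mul_ne_zero (pow_ne_zero _ hd0) hn1
  set X : Matrix (Fin 3) (Fin n) ℂ := Matrix.of (fun a _ => -(w a)/E) with hX
  set A' : Matrix (Fin 3) (Fin 3) ℂ :=
    Matrix.of (fun a b => A a b - (n:ℂ)/E * (w a * w b)) with hA'
  have hsum : ∀ k' : Fin n,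
      (∑ k : Fin n, if k = k' then (0:ℂ) else (d:ℂ)^2) = ((n:ℂ)-1) * (d:ℂ)^2 := by
    intro k'
    have hh : ∀ k : Fin n, (if k = k' then (0:ℂ) else (d:ℂ)^2)
        = (d:ℂ)^2 - (if k = k' then (d:ℂ)^2 else 0) := by
      intro k; split_ifs <;> ring
    simp only [hh, Finset.sum_sub_distrib, Finset.sum_const, Finset.card_univ,
      Fintype.card_fin, Finset.sum_ite_eq', Finset.mem_univ, if_true, nsmul_eq_mul]
    ring
  have hblk1 : (1 : Matrix (Fin 3) (Fin 3) ℂ) * A + X * C' = A' := by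
    rw [Matrix.one_mul]
    ext a b
    simp only [Matrix.add_apply, Matrix.mul_apply, hX, hC', hA', Matrix.of_apply,
      Finset.sum_const, Finset.card_univ, Fintype.card_fin, nsmul_eq_mul]
    ring
  have hblk2 : (1 : Matrix (Fin 3) (Fin 3) ℂ) * C + X * D = 0 := by
    rw [Matrix.one_mul]
    ext a k'
    have hEc : ((n:ℂ)-1) * (d:ℂ)^2 = E := by rw [hE]; ring
    simp only [Matrix.add_apply, Matrix.mul_apply, hX, hC, hD, Matrix.of_apply,
      Matrix.zero_apply]
    rw [← Finset.mul_sum, hsum, hEc, div_mul_cancel₀ _ hE0]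
    ring
  have key : (Matrix.fromBlocks A C C' D).det = A'.det * D.det := by
    have h1 : (Matrix.fromBlocks (1 : Matrix (Fin 3) (Fin 3) ℂ) X 0
        (1 : Matrix (Fin n) (Fin n) ℂ)).det = 1 := by
      rw [Matrix.det_fromBlocks_zero₂₁]; simp
    calc (Matrix.fromBlocks A C C' D).det
        = (Matrix.fromBlocks (1 : Matrix (Fin 3) (Fin 3) ℂ) X 0
            (1 : Matrix (Fin n) (Fin n) ℂ) * Matrix.fromBlocks A C C' D).det := by
          rw [Matrix.det_mul, h1, one_mul]
      _ = (Matrix.fromBlocks A' 0 C' D).det := by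
          rw [Matrix.fromBlocks_multiply, hblk1, hblk2, Matrix.zero_mul,
            Matrix.zero_mul, Matrix.one_mul, Matrix.one_mul, zero_add, zero_add]
      _ = A'.det * D.det := Matrix.det_fromBlocks_zero₁₂ _ _ _
  have hDdet : D.det = ((d:ℂ)^2)^n * ((-1:ℂ)^n * (1 - (n:ℂ))) := by
    have hDK : D = (d:ℂ)^2 • (-(1 + Matrix.replicateCol Unit (fun _ => (-1:ℂ)) *
        Matrix.replicateRow Unit (fun _ => (1:ℂ)))) := by
      ext i j
      simp only [hD, Matrix.of_apply, Matrix.smul_apply, Matrix.neg_apply,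
        Matrix.add_apply, Matrix.one_apply, Matrix.mul_apply, Matrix.replicateCol_apply,
        Matrix.replicateRow_apply, Finset.univ_unique, Finset.sum_singleton, smul_eq_mul]
      by_cases h : i = j <;> simp [h]
    rw [hDK, Matrix.det_smul, Matrix.det_neg, Matrix.det_one_add_replicateCol_mul_replicateRow]
    simp only [dotProduct, Finset.sum_const, Finset.card_univ, Fintype.card_fin,
      nsmul_eq_mul, Fintype.card_fin, mul_neg_one]
    ring
  have hAdet : A'.det = ((n:ℂ)/E * t - 4 * ((n:ℂ)/E) * (d:ℂ)^2 + 2) * t := by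
    rw [Matrix.det_fin_three]
    simp [hA', hA, hw, Matrix.vecHead, Matrix.vecTail, Function.comp]
    ring
  rw [← Matrix.det_submatrix_equiv_self e, hM, key, hAdet, hDdet]
  obtain ⟨m, rfl⟩ : ∃ m, n = m + 2 := ⟨n - 2, by omega⟩
  have e1 : (m + 2) - 1 = m + 1 := by omega
  have e2 : 2 * (m + 2) - 2 = 2 * m + 2 := by omega
  have e3 : ((d:ℂ)^2)^(m+2) = (d:ℂ)^(2*m+2) * (d:ℂ)^2 := by
    rw [← pow_mul, show 2*(m+2) = 2*m+2+2 from by omega, pow_add]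
  have e4 : ((-1:ℂ))^(m+2) = (-1:ℂ)^(m+1) * (-1) := by rw [pow_succ]
  rw [e1, e2, e3, e4]
  push_cast
  have h5 : (m:ℂ) * (d:ℂ)^2 + (d:ℂ)^2 ≠ 0 := by
    have h6 : ((m:ℂ)+1) ≠ 0 := Nat.cast_add_one_ne_zero m
    have h7 : (m:ℂ)*(d:ℂ)^2+(d:ℂ)^2 = ((m:ℂ)+1)*(d:ℂ)^2 := by ring
    rw [h7]; exact mul_ne_zero h6 (pow_ne_zero _ hd0)
  have hu : ((m:ℂ) * (d:ℂ)^2 + (d:ℂ)^2)⁻¹ * ((m:ℂ)*(d:ℂ)^2 + (d:ℂ)^2) = 1 :=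
    inv_mul_cancel₀ h5
  have h8 : (d:ℂ)^2 * ((m:ℂ) + 2 - 1) ≠ 0 := by
    have h7 : (d:ℂ)^2 * ((m:ℂ) + 2 - 1) = (m:ℂ) * (d:ℂ)^2 + (d:ℂ)^2 := by ring
    rw [h7]; exact h5
  rw [hE]; push_cast
  have h9 : (m:ℂ) + 1 ≠ 0 := Nat.cast_add_one_ne_zero m
  rw [show (m:ℂ) + 2 - 1 = (m:ℂ) + 1 by ring]
  field_simp
  ring
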